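/- Let A and B be commutative algebras over a field of characteristic zero, φ : A → B a ring homomorphism, P an A-module, Q a B-module, and φ̄ : P → Q an A-linear map. Let 𝒜 = A ⊕ P be the diole algebra (trivial square-zero extension) and let 𝒫 = B × Q be the 𝒜-module with action (a,p)•(b,q) := (φ(a)·b, φ(a)•q + b•φ̄(p)). Let Δ^A : A → B and Δ^P : P → Q be additive maps and define Δ : 𝒜 → 𝒫 by Δ(a,p) := (Δ^A(a), Δ^P(p)). For t ∈ 𝒜 set δ_t(Δ)(s) := t•Δ(s) − Δ(t·s). Then Δ is a differential operator of order ≤ k over 𝒜 (i.e. δ_{t₀}∘⋯∘δ_{t_k}(Δ) = 0 for all t₀,…,t_k ∈ 𝒜) if and only if: Δ^A is a differential operator of order ≤ k along φ (δ_{a₀}∘⋯∘δ_{a_k}(Δ^A) = 0 for all aᵢ ∈ A, where δ_a(Δ^A)(x) := φ(a)·Δ^A(x) − Δ^A(a·x)); Δ^P is a differential operator of order ≤ k from P to Q regarded as an A-module via φ (with δ_a(Δ^P)(p) := φ(a)•Δ^P(p) − Δ^P(a•p)); and φ̄(p)•δ_a^k(Δ^A)(1_A) = δ_a^k(Δ^P)(p)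 for all a ∈ A, p ∈ P, where δ_a^k denotes the k-fold iterate of δ_a. -/

import Mathlib

/-- The multiplication of the diole algebra `𝒜 = A ⊕ P` (trivial square-zero
extension) on `A × P`. -/
def dioleMul {A P : Type*} [CommRing A] [AddCommGroup P] [Module A P] :
    A × P → A × P → A × P :=
  fun s t => (s.1 * t.1, s.1 • t.2 + t.1 • s.2)

/-- The action of the diole algebra `𝒜 = A ⊕ P` on the diole module
`𝒫_φ̄ = B × Q`: `(a,p)•(b,q) := (φ(a)·b, φ(a)•q + b•φ̄(p))`. -/
def dioleAct {A B P Q : Type*} [CommRing A] [CommRing B]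
    [AddCommGroup P] [Module A P] [AddCommGroup Q] [Module B Q]
    (φ : A →+* B) (φb : P → Q) : A × P → B × Q → B × Q :=
  fun s x => (φ s.1 * x.1, φ s.1 • x.2 + x.1 • φb s.2)

/-- `δ_t(Δ)(s) := t•Δ(s) − Δ(t·s)` for maps `𝒜 → 𝒫_φ̄`. -/
def dioleDelta {A B P Q : Type*} [CommRing A] [CommRing B]
    [AddCommGroup P] [Module A P] [AddCommGroup Q] [Module B Q]
    (φ : A →+* B) (φb : P → Q) (t : A × P) (Δ : A × P → B × Q) : A × P → B × Q :=
  fun s => dioleAct φ φb t (Δ s) - Δ (dioleMul t s)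

/-- `δ_a(Δ^A)(x) := φ(a)·Δ^A(x) − Δ^A(a·x)` for maps `A → B` along `φ`. -/
def deltaAB {A B : Type*} [CommRing A] [CommRing B] (φ : A →+* B)
    (a : A) (Δ : A → B) : A → B :=
  fun x => φ a * Δ x - Δ (a * x)

/-- `δ_a(Δ^P)(p) := φ(a)•Δ^P(p) − Δ^P(a•p)` for maps `P → Q` along `φ`. -/
def deltaPQ {A B P Q : Type*} [CommRing A] [CommRing B]
    [AddCommGroup P] [Module A P] [AddCommGroup Q] [Module B Q]
    (φ : A →+* B) (a : A) (Δ : P → Q) : P → Q :=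
  fun p => φ a • Δ p - Δ (a • p)

section Aux

variable {A B P Q : Type*} [CommRing A] [CommRing B]
    [AddCommGroup P] [Module A P] [AddCommGroup Q] [Module B Q]

/-- `δ_a` on maps `A → Q`. -/
private def dDeltaQ (φ : A →+* B) (a : A) (Ψ : A → Q) : A → Q :=
  fun x => φ a • Ψ x - Ψ (a * x)

/-- The cross term of iterated diolic deltas. -/
private def dPhi (φ : A →+* B) (φb : P → Q) (ΔA : A → B) (ΔP : P → Q) :
    List (A × P) → A → Q
  | [] => fun _ => 0
  | t :: ts => fun x =>
      dDeltaQ φ t.1 (dPhi φ φb ΔA ΔP ts) x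
        + ((ts.map Prod.fst).foldr (deltaAB φ) ΔA x • φb t.2
            - (ts.map Prod.fst).foldr (deltaPQ φ) ΔP (x • t.2))

variable (φ : A →+* B) (φb : P → Q)

private lemma addfun_zero {M N : Type*} [AddCommGroup M] [AddCommGroup N]
    {f : M → N} (h : ∀ x y, f (x + y) = f x + f y) : f 0 = 0 := by
  have := h 0 0
  simpa using this.symm

private lemma foldAB_add {ΔA : A → B} (h : ∀ x y, ΔA (x + y) = ΔA x + ΔA y)
    (as : List A) : ∀ x y, as.foldr (deltaAB φ) ΔA (x + y)
      = as.foldr (deltaAB φ) ΔA x + as.foldr (deltaAB φ) ΔA y := by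
  induction as with
  | nil => exact h
  | cons a as ih =>
    intro x y
    simp only [List.foldr_cons, deltaAB, mul_add, ih]
    ring

private lemma foldPQ_add {ΔP : P → Q} (h : ∀ x y, ΔP (x + y) = ΔP x + ΔP y)
    (as : List A) : ∀ x y, as.foldr (deltaPQ φ) ΔP (x + y)
      = as.foldr (deltaPQ φ) ΔP x + as.foldr (deltaPQ φ) ΔP y := by
  induction as with
  | nil => exact h
  | cons a as ih =>
    intro x y
    simp only [List.foldr_cons, deltaPQ, smul_add, ih]
    abel

private lemma fold_structure (ΔA : A → B) (ΔP : P → Q)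
    (hΔP : ∀ p p', ΔP (p + p') = ΔP p + ΔP p') (ts : List (A × P)) :
    ts.foldr (dioleDelta φ φb) (fun s => (ΔA s.1, ΔP s.2)) =
      fun s => ((ts.map Prod.fst).foldr (deltaAB φ) ΔA s.1,
                (ts.map Prod.fst).foldr (deltaPQ φ) ΔP s.2 + dPhi φ φb ΔA ΔP ts s.1) := by
  induction ts with
  | nil =>
    funext s
    simp [dPhi]
  | cons t ts ih =>
    funext s
    rw [List.foldr_cons, ih]
    simp only [dioleDelta, dioleAct, dioleMul, List.map_cons, List.foldr_cons, dPhi]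
    ext
    · simp [deltaAB]
    · simp only [Prod.snd_sub, dDeltaQ]
      rw [foldPQ_add φ hΔP (ts.map Prod.fst)]
      simp only [deltaPQ, smul_add]
      abel

private lemma foldr_replicate' {α β : Type*} (f : α → β → β) (a : α) (b : β) :
    ∀ n : ℕ, (List.replicate n a).foldr f b = (f a)^[n] b
  | 0 => rfl
  | n + 1 => by
    rw [List.replicate_succ, List.foldr_cons, foldr_replicate' f a b n,
      Function.iterate_succ_apply']

private lemma dPhi_map_zero (ΔA : A → B) (ΔP : P → Q)
    (hφb : φb 0 = 0) (hΔP0 : ∀ as : List A, as.foldr (deltaPQ φ) ΔP 0 = 0) (as : List A) :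
    dPhi φ φb ΔA ΔP (as.map (fun a => (a, (0 : P)))) = fun _ => 0 := by
  induction as with
  | nil => rfl
  | cons a as ih =>
    funext x
    simp [dPhi, ih, dDeltaQ, hφb, hΔP0]

private lemma dDeltaQ_smulB (b : A) (F : A → B) (q : Q) :
    dDeltaQ φ b (fun x => F x • q) = fun x => deltaAB φ b F x • q := by
  funext x
  simp [dDeltaQ, deltaAB, sub_smul, mul_smul]

private lemma dDeltaQ_smulP (b : A) (G : P → Q) (p : P) :
    dDeltaQ φ b (fun x => G (x • p)) = fun x => deltaPQ φ b G (x • p) := by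
  funext x
  simp [dDeltaQ, deltaPQ, mul_smul]

private lemma dDeltaQ_sub (b : A) (Ψ Ψ' : A → Q) :
    dDeltaQ φ b (fun x => Ψ x - Ψ' x) = fun x => dDeltaQ φ b Ψ x - dDeltaQ φ b Ψ' x := by
  funext x
  simp only [dDeltaQ, smul_sub]
  abel

private lemma dDeltaQ_add (b : A) (Ψ Ψ' : A → Q) :
    dDeltaQ φ b (fun x => Ψ x + Ψ' x) = fun x => dDeltaQ φ b Ψ x + dDeltaQ φ b Ψ' x := by
  funext x
  simp only [dDeltaQ, smul_add]
  abel

private lemma foldQ_zero (bs : List A) :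
    bs.foldr (dDeltaQ φ) (fun _ => (0 : Q)) = fun _ => 0 := by
  induction bs with
  | nil => rfl
  | cons b bs ih => rw [List.foldr_cons, ih]; funext x; simp [dDeltaQ]

private lemma foldQ_add (bs : List A) (Ψ Ψ' : A → Q) :
    bs.foldr (dDeltaQ φ) (fun x => Ψ x + Ψ' x)
      = fun x => bs.foldr (dDeltaQ φ) Ψ x + bs.foldr (dDeltaQ φ) Ψ' x := by
  induction bs with
  | nil => rfl
  | cons b bs ih =>
    rw [List.foldr_cons, ih, List.foldr_cons, List.foldr_cons, ← dDeltaQ_add]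

private lemma foldQ_cross (bs : List A) (F : A → B) (G : P → Q) (q : Q) (p : P) :
    bs.foldr (dDeltaQ φ) (fun x => F x • q - G (x • p))
      = fun x => bs.foldr (deltaAB φ) F x • q - bs.foldr (deltaPQ φ) G (x • p) := by
  induction bs with
  | nil => rfl
  | cons b bs ih =>
    rw [List.foldr_cons, ih, dDeltaQ_sub, dDeltaQ_smulB, dDeltaQ_smulP]
    rfl

private lemma dPhi_fold_vanish (k : ℕ) (ΔA : A → B) (ΔP : P → Q)
    (hstar : ∀ bs : List A, bs.length = k → ∀ x p,
      bs.foldr (deltaAB φ) ΔA x • φb p = bs.foldr (deltaPQ φ) ΔP (x • p)) :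
    ∀ (ts : List (A × P)) (bs : List A), ts.length + bs.length = k + 1 →
      bs.foldr (dDeltaQ φ) (dPhi φ φb ΔA ΔP ts) = fun _ => 0 := by
  intro ts
  induction ts with
  | nil =>
    intro bs _
    show bs.foldr (dDeltaQ φ) (fun _ => 0) = fun _ => 0
    exact foldQ_zero φ bs
  | cons t ts ih =>
    intro bs hlen
    have hPhi : dPhi φ φb ΔA ΔP (t :: ts) = fun x =>
        dDeltaQ φ t.1 (dPhi φ φb ΔA ΔP ts) x
          + ((ts.map Prod.fst).foldr (deltaAB φ) ΔA x • φb t.2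
              - (ts.map Prod.fst).foldr (deltaPQ φ) ΔP (x • t.2)) := rfl
    rw [hPhi, foldQ_add]
    have h1 : bs.foldr (dDeltaQ φ) (dDeltaQ φ t.1 (dPhi φ φb ΔA ΔP ts)) = fun _ => 0 := by
      have := ih (bs ++ [t.1]) (by simp at hlen ⊢; omega)
      rwa [List.foldr_append, List.foldr_cons, List.foldr_nil] at this
    have h2 : bs.foldr (dDeltaQ φ)
        (fun x => (ts.map Prod.fst).foldr (deltaAB φ) ΔA x • φb t.2
          - (ts.map Prod.fst).foldr (deltaPQ φ) ΔP (x • t.2)) = fun _ => 0 := by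
      rw [foldQ_cross]
      funext x
      rw [← List.foldr_append, ← List.foldr_append]
      rw [hstar (bs ++ ts.map Prod.fst) (by simp at hlen ⊢; omega) x t.2]
      simp
    rw [h1, h2]
    funext x
    simp

private lemma deltaAB_add_left {F : A → B} (hF : ∀ x y, F (x + y) = F x + F y) (a b : A) :
    deltaAB φ (a + b) F = fun x => deltaAB φ a F x + deltaAB φ b F x := by
  funext x
  simp only [deltaAB, map_add, add_mul, hF]
  ring

private lemma deltaPQ_add_left {G : P → Q} (hG : ∀ x y, G (x + y) = G x + G y) (a b : A) :
    deltaPQ φ (a + b) G = fun p => deltaPQ φ a G p + deltaPQ φ b G p := by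
  funext x
  simp only [deltaPQ, map_add, add_smul, add_smul, hG]
  abel

private lemma foldAB_set_add {ΔA : A → B} (hΔA : ∀ x y, ΔA (x + y) = ΔA x + ΔA y) :
    ∀ (l : List A) (i : ℕ), i < l.length → ∀ (a b : A),
      (l.set i (a + b)).foldr (deltaAB φ) ΔA
        = fun x => (l.set i a).foldr (deltaAB φ) ΔA x
            + (l.set i b).foldr (deltaAB φ) ΔA x := by
  intro l
  induction l with
  | nil => intro i h; simp at h
  | cons c l ih =>
    intro i h a b
    cases i with
    | zero =>
      simp only [List.set]
      rw [List.foldr_cons, List.foldr_cons, List.foldr_cons,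
        deltaAB_add_left φ (foldAB_add φ hΔA l) a b]
    | succ i =>
      simp only [List.set]
      funext x
      simp only [List.foldr_cons, deltaAB]
      rw [ih i (by simpa using h) a b]
      ring

private lemma foldPQ_set_add {ΔP : P → Q} (hΔP : ∀ x y, ΔP (x + y) = ΔP x + ΔP y) :
    ∀ (l : List A) (i : ℕ), i < l.length → ∀ (a b : A),
      (l.set i (a + b)).foldr (deltaPQ φ) ΔP
        = fun p => (l.set i a).foldr (deltaPQ φ) ΔP p
            + (l.set i b).foldr (deltaPQ φ) ΔP p := by
  intro l
  induction l with
  | nil => intro i h; simp at h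
  | cons c l ih =>
    intro i h a b
    cases i with
    | zero =>
      simp only [List.set]
      rw [List.foldr_cons, List.foldr_cons, List.foldr_cons,
        deltaPQ_add_left φ (foldPQ_add φ hΔP l) a b]
    | succ i =>
      simp only [List.set]
      funext p
      simp only [List.foldr_cons, deltaPQ]
      rw [ih i (by simpa using h) a b, smul_add]
      exact add_sub_add_comm _ _ _ _

private lemma foldAB_perm (Δ : A → B) {l₁ l₂ : List A} (h : l₁.Perm l₂) :
    l₁.foldr (deltaAB φ) Δ = l₂.foldr (deltaAB φ) Δ := by
  have inst : LeftCommutative (deltaAB φ (B := B)) := ⟨fun a b F => by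
    funext x
    simp only [deltaAB]
    rw [mul_left_comm b a x]
    ring⟩
  exact h.foldr_eq Δ

private lemma foldPQ_perm (Δ : P → Q) {l₁ l₂ : List A} (h : l₁.Perm l₂) :
    l₁.foldr (deltaPQ φ) Δ = l₂.foldr (deltaPQ φ) Δ := by
  have inst : LeftCommutative (deltaPQ (P := P) (Q := Q) φ) := ⟨fun a b G => by
    funext p
    simp only [deltaPQ]
    rw [smul_comm b a p]
    simp only [smul_sub, smul_smul]
    rw [mul_comm (φ b) (φ a)]
    abel⟩
  exact h.foldr_eq Δ

private lemma foldAB_semilinear (k : ℕ) (ΔA : A → B)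
    (hA : ∀ as : List A, as.length = k + 1 → as.foldr (deltaAB φ) ΔA = 0)
    (bs : List A) (hbs : bs.length = k) (c x : A) :
    bs.foldr (deltaAB φ) ΔA (c * x) = φ c * bs.foldr (deltaAB φ) ΔA x := by
  have h0 := congrFun (hA (c :: bs) (by simp [hbs])) x
  simp only [List.foldr_cons, deltaAB, Pi.zero_apply] at h0
  exact (sub_eq_zero.1 h0).symm

private lemma foldPQ_semilinear (k : ℕ) (ΔP : P → Q)
    (hP : ∀ as : List A, as.length = k + 1 → as.foldr (deltaPQ φ) ΔP = 0)
    (bs : List A) (hbs : bs.length = k) (c : A) (p : P) :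
    bs.foldr (deltaPQ φ) ΔP (c • p) = φ c • bs.foldr (deltaPQ φ) ΔP p := by
  have h0 := congrFun (hP (c :: bs) (by simp [hbs])) p
  simp only [List.foldr_cons, deltaPQ, Pi.zero_apply] at h0
  exact (sub_eq_zero.1 h0).symm

end Aux

section Polar
open Finset

private lemma auxNegPowSub (m r : ℕ) (h : r ≤ m) :
    (-1 : ℤ) ^ (m - r) = (-1) ^ m * (-1) ^ r := by
  obtain ⟨d, rfl⟩ := Nat.exists_eq_add_of_le h
  rw [Nat.add_sub_cancel_left, pow_add]
  have h2 : (-1 : ℤ) ^ r * (-1) ^ r = 1 := by rw [← mul_pow]; norm_num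
  calc ((-1 : ℤ)) ^ d = ((-1) ^ r * (-1) ^ r) * (-1) ^ d := by rw [h2, one_mul]
    _ = (-1) ^ r * (-1) ^ d * (-1) ^ r := by ring

private lemma auxSignSum {α : Type*} [Fintype α] [DecidableEq α] (T : Finset α) :
    ∑ S ∈ (Finset.univ : Finset α).powerset,
      (if T ⊆ S then ((-1 : ℤ) ^ (Fintype.card α - S.card)) else 0) =
      (if T = Finset.univ then 1 else 0) := by
  rw [← Finset.sum_filter]
  have step : ∑ S ∈ (Finset.univ : Finset α).powerset.filter (fun S => T ⊆ S),
      (-1 : ℤ) ^ (Fintype.card α - S.card)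
      = ∑ R ∈ Tᶜ.powerset, (-1 : ℤ) ^ (Fintype.card α - (R ∪ T).card) := by
    refine Finset.sum_nbij' (fun S => S \ T) (fun R => R ∪ T) ?_ ?_ ?_ ?_ ?_
    · intro S hS
      simp only [mem_filter, mem_powerset] at hS
      simp only [mem_powerset]
      intro x hx
      simp only [mem_sdiff] at hx
      simp [mem_compl, hx.2]
    · intro R _; simp
    · intro S hS
      simp only [mem_filter, mem_powerset] at hS
      exact Finset.sdiff_union_of_subset hS.2
    · intro R hR
      simp only [mem_powerset] at hR
      show (R ∪ T) \ T = R
      rw [Finset.union_sdiff_right]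
      exact Finset.sdiff_eq_self_of_disjoint
        (Finset.disjoint_left.2 fun x hxR hxT => (Finset.mem_compl.1 (hR hxR)) hxT)
    · intro S hS
      simp only [mem_filter, mem_powerset] at hS
      rw [Finset.sdiff_union_of_subset hS.2]
  rw [step]
  have cardeq : ∀ R ∈ Tᶜ.powerset, (-1 : ℤ) ^ (Fintype.card α - (R ∪ T).card)
      = (-1 : ℤ) ^ Tᶜ.card * (-1) ^ R.card := by
    intro R hR
    simp only [mem_powerset] at hR
    have hdisj : Disjoint R T :=
      Finset.disjoint_left.2 fun x hxR hxT => (Finset.mem_compl.1 (hR hxR)) hxT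
    rw [Finset.card_union_of_disjoint hdisj]
    have h1 : R.card ≤ Tᶜ.card := Finset.card_le_card hR
    have h2 : T.card + Tᶜ.card = Fintype.card α := by
      rw [add_comm, Finset.card_compl_add_card]
    have : Fintype.card α - (R.card + T.card) = Tᶜ.card - R.card := by omega
    rw [this, auxNegPowSub _ _ h1]
  rw [Finset.sum_congr rfl cardeq, ← Finset.mul_sum, Finset.sum_powerset_neg_one_pow_card]
  by_cases hT : T = Finset.univ
  · simp [hT]
  · have : Tᶜ ≠ ∅ := by
      simp only [ne_eq, Finset.compl_eq_empty_iff]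
      exact hT
    simp [hT, this]

private lemma auxPolarization {A Q : Type*} [AddCommGroup A] [AddCommGroup Q] (k : ℕ)
    (f : (Fin k → A) → Q)
    (hadd : ∀ (inst : DecidableEq (Fin k)) (v : Fin k → A) (i : Fin k) (a b : A),
      f (@Function.update _ _ inst v i (a + b)) =
        f (@Function.update _ _ inst v i a) + f (@Function.update _ _ inst v i b))
    (hsymm : ∀ (v : Fin k → A) (e : Equiv.Perm (Fin k)), f (v ∘ e) = f v)
    (hdiag : ∀ a : A, f (fun _ => a) = 0)
    (htf : ∀ (n : ℕ) (q : Q), n ≠ 0 → n • q = 0 → q = 0)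
    (v : Fin k → A) : f v = 0 := by
  classical
  let F : MultilinearMap ℤ (fun _ : Fin k => A) Q :=
    { toFun := f
      map_update_add' := fun {inst} m i x y => hadd inst m i x y
      map_update_smul' := fun {inst} m i c x => by
        let g : A →+ Q := AddMonoidHom.mk' (fun a => f (@Function.update _ _ inst m i a))
          (fun a b => hadd inst m i a b)
        exact map_zsmul g c x }
  have hF : ∀ w, F w = f w := fun _ => rfl
  have lhs0 : ∑ S ∈ (Finset.univ : Finset (Fin k)).powerset,
      (-1 : ℤ) ^ (k - S.card) • F (fun _ => ∑ j ∈ S, v j) = 0 :=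
    Finset.sum_eq_zero fun S _ => by rw [hF, hdiag, smul_zero]
  have e1 : ∀ S : Finset (Fin k),
      F (fun _ => ∑ j ∈ S, v j)
        = ∑ r ∈ Fintype.piFinset (fun _ : Fin k => S), F (fun i => v (r i)) :=
    fun S => F.map_sum_finset (fun _ j => v j) (fun _ => S)
  have e2 : ∀ S : Finset (Fin k),
      Fintype.piFinset (fun _ : Fin k => S)
        = Finset.univ.filter (fun r : Fin k → Fin k => Finset.image r Finset.univ ⊆ S) := by
    intro S
    ext r
    simp [Fintype.mem_piFinset, Finset.image_subset_iff]
  have main : ∑ S ∈ (Finset.univ : Finset (Fin k)).powerset,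
      (-1 : ℤ) ^ (k - S.card) • F (fun _ => ∑ j ∈ S, v j)
      = ∑ r ∈ Finset.univ.filter
          (fun r : Fin k → Fin k => Finset.image r Finset.univ = Finset.univ),
          F (fun i => v (r i)) := by
    calc ∑ S ∈ (Finset.univ : Finset (Fin k)).powerset,
        (-1 : ℤ) ^ (k - S.card) • F (fun _ => ∑ j ∈ S, v j)
        = ∑ S ∈ (Finset.univ : Finset (Fin k)).powerset, ∑ r : Fin k → Fin k,
            (if Finset.image r Finset.univ ⊆ S then (-1 : ℤ) ^ (k - S.card) else 0)
              • F (fun i => v (r i)) := by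
          refine Finset.sum_congr rfl fun S _ => ?_
          rw [e1 S, e2 S, Finset.smul_sum, Finset.sum_filter]
          refine Finset.sum_congr rfl fun r _ => ?_
          split <;> simp
      _ = ∑ r : Fin k → Fin k, (∑ S ∈ (Finset.univ : Finset (Fin k)).powerset,
            if Finset.image r Finset.univ ⊆ S then (-1 : ℤ) ^ (k - S.card) else 0)
              • F (fun i => v (r i)) := by
          rw [Finset.sum_comm]
          refine Finset.sum_congr rfl fun r _ => ?_
          rw [Finset.sum_smul]
      _ = ∑ r : Fin k → Fin k,
            (if Finset.image r Finset.univ = Finset.univ then (1 : ℤ) else 0)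
              • F (fun i => v (r i)) := by
          refine Finset.sum_congr rfl fun r _ => ?_
          have := auxSignSum (Finset.image r Finset.univ)
          rw [Fintype.card_fin] at this
          rw [this]
      _ = ∑ r ∈ Finset.univ.filter
            (fun r : Fin k → Fin k => Finset.image r Finset.univ = Finset.univ),
            F (fun i => v (r i)) := by
          rw [Finset.sum_filter]
          refine Finset.sum_congr rfl fun r _ => ?_
          split <;> simp
  set N := (Finset.univ.filter
      (fun r : Fin k → Fin k => Finset.image r Finset.univ = Finset.univ)).card with hN
  have count : ∑ r ∈ Finset.univ.filter
      (fun r : Fin k → Fin k => Finset.image r Finset.univ = Finset.univ),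
      F (fun i => v (r i)) = N • f v := by
    rw [Finset.sum_congr rfl (fun r hr => ?_), Finset.sum_const]
    simp only [Finset.mem_filter] at hr
    have hsurj : Function.Surjective r := fun y => by
      have : y ∈ Finset.image r Finset.univ := by rw [hr.2]; exact Finset.mem_univ y
      obtain ⟨x, _, hx⟩ := Finset.mem_image.1 this
      exact ⟨x, hx⟩
    have hbij : Function.Bijective r := Finite.surjective_iff_bijective.1 hsurj
    let e := Equiv.ofBijective r hbij
    have : (fun i => v (r i)) = v ∘ e := rfl
    rw [hF, this, hsymm v e]
  have hNpos : N ≠ 0 := by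
    have : (id : Fin k → Fin k) ∈ Finset.univ.filter
        (fun r : Fin k → Fin k => Finset.image r Finset.univ = Finset.univ) := by
      simp
    intro h
    rw [hN] at h
    exact Finset.card_ne_zero_of_mem this h
  exact htf N (f v) hNpos (by rw [← count, ← main, lhs0])

end Polar

private lemma ofFn_update' {α : Type*} {k : ℕ} (inst : DecidableEq (Fin k)) (v : Fin k → α)
    (i : Fin k) (x : α) :
    List.ofFn (@Function.update _ _ inst v i x) = (List.ofFn v).set i x := by
  apply List.ext_getElem
  · simp
  · intro n h1 h2
    simp only [List.getElem_ofFn, List.getElem_set]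
    rw [Function.update_apply]
    by_cases hni : (i : ℕ) = n
    · simp [Fin.ext_iff, hni]
    · simp [Fin.ext_iff, hni, Ne.symm hni]

private lemma ofFn_get' {α : Type*} {k : ℕ} (l : List α) (h : l.length = k) :
    List.ofFn (fun i : Fin k => l.get (Fin.cast h.symm i)) = l := by
  apply List.ext_getElem
  · simp [h]
  · intro n h1 h2
    simp

private lemma coreStar {K A B P Q : Type*} [Field K] [CharZero K]
    [CommRing A] [CommRing B] [Algebra K A] [Algebra K B]
    [AddCommGroup P] [Module A P] [AddCommGroup Q] [Module B Q]
    (φ : A →+* B) (φb : P → Q) (k : ℕ)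
    (ΔA : A → B) (hΔA : ∀ a a', ΔA (a + a') = ΔA a + ΔA a')
    (ΔP : P → Q) (hΔP : ∀ p p', ΔP (p + p') = ΔP p + ΔP p')
    (hdiag : ∀ (a : A) (p : P),
      ((deltaAB φ a)^[k] ΔA) 1 • φb p = ((deltaPQ φ a)^[k] ΔP) p)
    (bs : List A) (hbs : bs.length = k) (p : P) :
    bs.foldr (deltaAB φ) ΔA 1 • φb p = bs.foldr (deltaPQ φ) ΔP p := by
  have htf : ∀ (n : ℕ) (q : Q), n ≠ 0 → n • q = 0 → q = 0 := by
    intro n q hn h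
    have h1 : ((n : B)) • q = 0 := by
      rw [Nat.cast_smul_eq_nsmul]; exact h
    have h2 : algebraMap K B ((n : K)⁻¹) • ((n : B) • q) = 0 := by rw [h1, smul_zero]
    rw [smul_smul] at h2
    have h3 : algebraMap K B ((n : K)⁻¹) * (n : B) = 1 := by
      rw [show ((n : B)) = algebraMap K B (n : K) by simp, ← map_mul,
        inv_mul_cancel₀ (by exact_mod_cast hn), map_one]
    rwa [h3, one_smul] at h2
  let f : (Fin k → A) → Q := fun v =>
    (List.ofFn v).foldr (deltaAB φ) ΔA 1 • φb p - (List.ofFn v).foldr (deltaPQ φ) ΔP p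
  have hf0 : ∀ v, f v = 0 := by
    intro v
    refine auxPolarization k f ?_ ?_ ?_ htf v
    · intro inst w i a b
      simp only [f, ofFn_update' inst]
      rw [foldAB_set_add φ hΔA (List.ofFn w) (i : ℕ) (by simp [i.isLt]) a b,
        foldPQ_set_add φ hΔP (List.ofFn w) (i : ℕ) (by simp [i.isLt]) a b, add_smul]
      exact add_sub_add_comm _ _ _ _
    · intro w e
      simp only [f]
      rw [foldAB_perm φ ΔA (e.ofFn_comp_perm w), foldPQ_perm φ ΔP (e.ofFn_comp_perm w)]
    · intro a
      simp only [f, List.ofFn_const, foldr_replicate', sub_eq_zero]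
      exact hdiag a p
  have hv : (List.ofFn fun i => bs.get (Fin.cast hbs.symm i)).foldr (deltaAB φ) ΔA 1 • φb p
      - (List.ofFn fun i => bs.get (Fin.cast hbs.symm i)).foldr (deltaPQ φ) ΔP p = 0 :=
    hf0 (fun i => bs.get (Fin.cast hbs.symm i))
  rw [ofFn_get' bs hbs] at hv
  exact sub_eq_zero.1 hv

/-- characterization of degree-zero order `≤ k` diolic differential
operators `Δ = (Δ^A, Δ^P) : 𝒜 → 𝒫_φ̄` in terms of differential operators along `φ`,
along `φ̄`, and the compatibility `φ̄(p)•δ_a^k(Δ^A)(1) = δ_a^k(Δ^P)(p)`. -/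
theorem diolic_diff_operators_along_map {K A B P Q : Type*} [Field K] [CharZero K]
    [CommRing A] [CommRing B] [Algebra K A] [Algebra K B]
    [AddCommGroup P] [Module A P] [AddCommGroup Q] [Module B Q]
    (φ : A →+* B) (φb : P → Q)
    (hφb_add : ∀ p p' : P, φb (p + p') = φb p + φb p')
    (hφb_smul : ∀ (a : A) (p : P), φb (a • p) = φ a • φb p)
    (k : ℕ)
    (ΔA : A → B) (hΔA : ∀ a a', ΔA (a + a') = ΔA a + ΔA a')
    (ΔP : P → Q) (hΔP : ∀ p p', ΔP (p + p') = ΔP p + ΔP p') :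
    (∀ ts : List (A × P), ts.length = k + 1 →
        ts.foldr (dioleDelta φ φb) (fun s => (ΔA s.1, ΔP s.2)) = 0) ↔
      ((∀ as : List A, as.length = k + 1 → as.foldr (deltaAB φ) ΔA = 0) ∧
       (∀ as : List A, as.length = k + 1 → as.foldr (deltaPQ φ) ΔP = 0) ∧
       (∀ (a : A) (p : P),
          ((deltaAB φ a)^[k] ΔA) 1 • φb p = ((deltaPQ φ a)^[k] ΔP) p)) := by
  have hφb0 : φb 0 = 0 := addfun_zero hφb_add
  have hG0 : ∀ as : List A, as.foldr (deltaPQ φ) ΔP 0 = 0 :=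
    fun as => addfun_zero (foldPQ_add φ hΔP as)
  constructor
  · intro hΔ
    refine ⟨?_, ?_, ?_⟩
    · intro as hlen
      have h := hΔ (as.map (fun a => (a, (0 : P)))) (by simp [hlen])
      rw [fold_structure φ φb ΔA ΔP hΔP] at h
      funext x
      have hx := (Prod.ext_iff.1 (congrFun h (x, 0))).1
      simpa [Function.comp_def] using hx
    · intro as hlen
      have h := hΔ (as.map (fun a => (a, (0 : P)))) (by simp [hlen])
      rw [fold_structure φ φb ΔA ΔP hΔP] at h
      funext p
      have hp := (Prod.ext_iff.1 (congrFun h (1, p))).2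
      rw [dPhi_map_zero φ φb ΔA ΔP hφb0 hG0 as] at hp
      simpa [Function.comp_def] using hp
    · intro a p
      have hlen : ((a, p) :: List.replicate k (a, (0 : P))).length = k + 1 := by simp
      have h := hΔ ((a, p) :: List.replicate k (a, (0 : P))) hlen
      rw [fold_structure φ φb ΔA ΔP hΔP] at h
      have hp := (Prod.ext_iff.1 (congrFun h (1, 0))).2
      have hrep : List.replicate k (a, (0 : P))
          = (List.replicate k a).map (fun a => (a, (0 : P))) := by
        rw [List.map_replicate]
      have hPhi : dPhi φ φb ΔA ΔP ((a, p) :: List.replicate k (a, (0 : P))) 1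
          = ((List.replicate k (a, (0:P))).map Prod.fst).foldr (deltaAB φ) ΔA 1 • φb p
            - ((List.replicate k (a, (0:P))).map Prod.fst).foldr (deltaPQ φ) ΔP
                ((1 : A) • p) := by
        show dDeltaQ φ a (dPhi φ φb ΔA ΔP (List.replicate k (a, (0 : P)))) 1 + _ = _
        rw [hrep, dPhi_map_zero φ φb ΔA ΔP hφb0 hG0]
        simp [dDeltaQ]
      rw [hPhi] at hp
      simp only [List.map_replicate, List.map_cons, List.foldr_cons, Prod.snd_zero] at hp
      rw [foldr_replicate', foldr_replicate', one_smul] at hp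
      have hz : deltaPQ φ a ((deltaPQ φ a)^[k] ΔP) 0 = 0 := by
        have h0 := hG0 (List.replicate (k + 1) a)
        rwa [List.replicate_succ, List.foldr_cons, foldr_replicate'] at h0
      rw [hz, zero_add] at hp
      exact sub_eq_zero.1 hp
  · rintro ⟨hA, hP, hdiag⟩
    intro ts hlen
    have hone := coreStar (K := K) φ φb k ΔA hΔA ΔP hΔP hdiag
    have hstar : ∀ bs : List A, bs.length = k → ∀ x p,
        bs.foldr (deltaAB φ) ΔA x • φb p = bs.foldr (deltaPQ φ) ΔP (x • p) := by
      intro bs hbs x p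
      have hx : bs.foldr (deltaAB φ) ΔA x = φ x * bs.foldr (deltaAB φ) ΔA 1 := by
        have := foldAB_semilinear φ k ΔA hA bs hbs x 1
        rwa [mul_one] at this
      rw [hx, foldPQ_semilinear φ k ΔP hP bs hbs x p, mul_smul, hone bs hbs p]
    rw [fold_structure φ φb ΔA ΔP hΔP]
    funext s
    have hfst : (ts.map Prod.fst).length = k + 1 := by simp [hlen]
    have h1 := congrFun (hA _ hfst) s.1
    have h2 := congrFun (hP _ hfst) s.2
    have h3 := congrFun (dPhi_fold_vanish φ φb k ΔA ΔP hstar ts [] (by simp [hlen])) s.1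
    simp only [List.foldr_nil] at h3
    rw [Prod.ext_iff]
    constructor
    · simpa using h1
    · simp only [Pi.zero_apply] at h1 h2 ⊢
      simp [h2, h3]
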